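/- arXiv:1103.6181 — 4 statements merged into one kernel-verified Lean document; each statement's English description precedes it below -/
import Mathlib

section
/- For 0 < λ < 2, the sequence defined by m₀ = 0 and m_{i+1} = 1/(λ - m_i) (defined while m_i < λ) is strictly increasing, and there exists some index i ≥ 1 with m_i ≥ λ; i.e., the sequence cannot be defined as an infinite sequence with all values in [0, λ). -/
/-- The sequence `m₀ = 0`, `m_{i+1} = 1/(λ - m_i)` (defined while `m_i < λ`) is strictly
increasing while defined, and there is some index `i ≥ 1` with `m_i ≥ λ`. -/
theorem stmt_1 (lam : ℝ) (h1 : 0 < lam) (h2 : lam < 2) (m : ℕ → ℝ)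
    (hm0 : m 0 = 0)
    (hrec : ∀ i, m i < lam → m (i + 1) = 1 / (lam - m i)) :
    (∀ i, (∀ j ≤ i, m j < lam) → m i < m (i + 1)) ∧
      (∃ i, 1 ≤ i ∧ lam ≤ m i) := by
  set δ : ℝ := (1 - lam ^ 2 / 4) / lam with hδdef
  have hδ : 0 < δ := div_pos (by nlinarith) h1
  have hδlam : δ * lam = 1 - lam ^ 2 / 4 := by
    field_simp [hδdef]
    rw [hδdef, div_mul_cancel₀ _ h1.ne']; ring
  -- key step: if 0 ≤ x < lam then x + δ ≤ 1/(lam - x)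
  have key : ∀ x : ℝ, 0 ≤ x → x < lam → x + δ ≤ 1 / (lam - x) := by
    intro x hx0 hxl
    have hpos : 0 < lam - x := by linarith
    rw [le_div_iff₀ hpos]
    have h1' : δ * x ≥ 0 := mul_nonneg hδ.le hx0
    nlinarith [sq_nonneg (x - lam / 2)]
  -- nonnegativity while defined
  have nonneg : ∀ i, (∀ j < i, m j < lam) → 0 ≤ m i := by
    intro i
    induction i with
    | zero => intro _; rw [hm0]
    | succ n ih =>
      intro h
      have hn : m n < lam := h n (Nat.lt_succ_self n)
      rw [hrec n hn]
      exact (one_div_pos.mpr (sub_pos.mpr hn)).le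
  have step : ∀ i, (∀ j ≤ i, m j < lam) → m i + δ ≤ m (i + 1) := by
    intro i h
    have hn : m i < lam := h i le_rfl
    have h0 : 0 ≤ m i := nonneg i fun j hj => h j hj.le
    rw [hrec i hn]
    exact key _ h0 hn
  constructor
  · intro i h
    have := step i h
    linarith
  · by_contra hc
    push_neg at hc
    have hall : ∀ i, m i < lam := by
      intro i
      rcases Nat.eq_zero_or_pos i with h | h
      · rw [h, hm0]; exact h1
      · exact hc i h
    have grow : ∀ i : ℕ, (i : ℝ) * δ ≤ m i := by
      intro i
      induction i with
      | zero => simp [hm0]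
      | succ n ih =>
        have := step n (fun j _ => hall j)
        push_cast
        linarith
    obtain ⟨n, hn⟩ := exists_nat_gt (lam / δ)
    have : lam < (n : ℝ) * δ := by
      rw [div_lt_iff₀ hδ] at hn
      linarith
    have := grow n
    have := hall n
    linarith
end

section
/- Let a₁, …, a_ℓ be positive integers and for 0 < λ < 2 define the alternating continued fraction F_ℓ(λ) = 1/(a₁λ − 1/(a₂λ − ⋯ − 1/(a_ℓλ))) (denoted ⟦a₁, …, a_ℓ⟧_λ), assuming all denominators appearing are positive. Then λ ↦ ⟦a₁, …, a_ℓ⟧_λ is a strictly decreasing function of λ on its domain of definition. -/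
/-- The finite alternating `λ`-continued fraction `⟦a₁, …, a_ℓ⟧_λ`:
`cf λ [] = 0` and `cf λ (a :: l) = 1/(a·λ − cf λ l)`. -/
noncomputable def cf (lam : ℝ) : List ℕ → ℝ
  | [] => 0
  | a :: l => 1 / (a * lam - cf lam l)

/-- All denominators occurring in `⟦a₁, …, a_ℓ⟧_λ` are positive. -/
def cfGood (lam : ℝ) : List ℕ → Prop
  | [] => True
  | a :: l => cfGood lam l ∧ 0 < a * lam - cf lam l

lemma cf_le (lam lam' : ℝ) (hlt : lam < lam') :
    ∀ l : List ℕ, (∀ a ∈ l, 1 ≤ a) → cfGood lam l → cfGood lam' l →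
      cf lam' l ≤ cf lam l := by
  intro l
  induction l with
  | nil => intro _ _ _; simp [cf]
  | cons a t ih =>
    intro ha g g'
    have ht : cf lam' t ≤ cf lam t :=
      ih (fun b hb => ha b (List.mem_cons_of_mem _ hb)) g.1 g'.1
    have ha1 : (1 : ℝ) ≤ (a : ℕ) := by
      exact_mod_cast ha a List.mem_cons_self
    have hden : a * lam - cf lam t < a * lam' - cf lam' t := by
      have : (a : ℝ) * lam < a * lam' := by
        apply mul_lt_mul_of_pos_left hlt (by linarith)
      linarith
    have := one_div_lt_one_div_of_lt g.2 hden
    simp only [cf]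
    linarith

/-- For positive integers `a₁, …, a_ℓ` (`ℓ ≥ 1`), the map `λ ↦ ⟦a₁, …, a_ℓ⟧_λ` is
strictly decreasing on its domain of definition. -/
theorem stmt_10 (l : List ℕ) (hne : l ≠ []) (ha : ∀ a ∈ l, 1 ≤ a)
    (lam lam' : ℝ) (h0 : 0 < lam) (hlt : lam < lam') (h2 : lam' < 2)
    (g : cfGood lam l) (g' : cfGood lam' l) :
    cf lam' l < cf lam l := by
  match l with
  | [] => exact absurd rfl hne
  | a :: t =>
    have ht : cf lam' t ≤ cf lam t :=
      cf_le lam lam' hlt t (fun b hb => ha b (List.mem_cons_of_mem _ hb)) g.1 g'.1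
    have ha1 : (1 : ℝ) ≤ (a : ℕ) := by
      exact_mod_cast ha a List.mem_cons_self
    have hden : a * lam - cf lam t < a * lam' - cf lam' t := by
      have : (a : ℝ) * lam < a * lam' := by
        apply mul_lt_mul_of_pos_left hlt (by linarith)
      linarith
    have := one_div_lt_one_div_of_lt g.2 hden
    simp only [cf]
    linarith
end

section
/- For i ≥ 0 and a real number y ≥ 0 with finite alternating λ-continued fraction expansion y = ⟦b₁, …, b_ℓ⟧_λ, the value h_i(y), where h_i = h^i ∘ h₀ with h(t) = 1/(λ−t) and h₀(t) = t/(λt+1), has the expansion h_i(y) = ⟦1, 1, …, 1 (i ones), 1+b₁, b₂, …, b_ℓ⟧_λ, whenever both sides are well-defined. -/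
/-- The list `1, …, 1 (i ones), 1+b₁, b₂, …, b_ℓ` (just the `i` ones if `bs = []`). -/
def hiList (i : ℕ) (bs : List ℕ) : List ℕ :=
  List.replicate i 1 ++ (match bs with | [] => [] | b :: t => (b + 1) :: t)

/-- For `h(t) = 1/(λ−t)`, `h₀(t) = t/(λt+1)` and `h_i = h^i ∘ h₀`:
if `y = ⟦b₁, …, b_ℓ⟧_λ` then `h_i(y) = ⟦1, …, 1 (i ones), 1+b₁, b₂, …, b_ℓ⟧_λ`,
whenever both sides are well-defined. -/
theorem stmt_11 (lam : ℝ) (h1 : 0 < lam) (h2 : lam < 2) (i : ℕ) (bs : List ℕ)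
    (hb : ∀ b ∈ bs, 1 ≤ b) (g : cfGood lam bs) (g' : cfGood lam (hiList i bs)) :
    (fun t : ℝ => 1 / (lam - t))^[i] (cf lam bs / (lam * cf lam bs + 1)) =
      cf lam (hiList i bs) := by
  clear g'
  induction i with
  | zero =>
    simp only [Function.iterate_zero, id_eq]
    cases bs with
    | nil => simp [cf, hiList]
    | cons b t =>
      obtain ⟨_, hpos⟩ := g
      have hd : (b : ℝ) * lam - cf lam t ≠ 0 := ne_of_gt hpos
      have hy : cf lam (b :: t) = 1 / ((b : ℝ) * lam - cf lam t) := rfl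
      have hden : lam * cf lam (b :: t) + 1 ≠ 0 := by
        have : 0 < cf lam (b :: t) := by
          rw [hy]; positivity
        positivity
      have hsum : lam + ((b : ℝ) * lam - cf lam t) ≠ 0 := by
        have : 0 < lam + ((b : ℝ) * lam - cf lam t) := by positivity
        exact ne_of_gt this
      have : cf lam (hiList 0 (b :: t)) = 1 / (((b : ℝ) + 1) * lam - cf lam t) := by
        simp [hiList, cf]
      rw [this, hy,
        show ((b : ℝ) + 1) * lam - cf lam t = lam + ((b : ℝ) * lam - cf lam t) by ring]
      set d := (b : ℝ) * lam - cf lam t with hdef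
      field_simp
  | succ n ih =>
    rw [Function.iterate_succ_apply', ih]
    have : hiList (n + 1) bs = 1 :: hiList n bs := by
      simp [hiList, List.replicate_succ]
    rw [this]
    simp [cf]
end

section
/- Let β > 1 with greedy expansion data: suppose the sequence O_β(1) := lim_{t→1⁻} of the digit sequences of t starts with digits k, j where k ≥ 2 is an integer and 0 ≤ j ≤ k. Then |β − (k + j/k)| ≤ 1/k. -/
/-- The greedy `β`-expansion map `S_β(t) = βt mod 1`. -/
noncomputable def betaMap (β : ℝ) (t : ℝ) : ℝ := Int.fract (β * t)

/-- The `n`-th digit of the greedy `β`-expansion of `t`. -/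
noncomputable def betaDigit (β : ℝ) (n : ℕ) (t : ℝ) : ℤ := ⌊β * (betaMap β)^[n] t⌋

/-- If `β > 1` and the sequence `O_β(1) = lim_{t→1⁻} O_β(t)` starts with digits `k j`,
where `k ≥ 2` is an integer and `0 ≤ j ≤ k`, then `|β − (k + j/k)| ≤ 1/k`. -/
theorem stmt_17 (β : ℝ) (hβ : 1 < β) (k j : ℕ) (hk : 2 ≤ k) (hj : j ≤ k)
    (h0 : ∀ᶠ t in nhdsWithin (1 : ℝ) (Set.Iio 1), betaDigit β 0 t = (k : ℤ))
    (h1 : ∀ᶠ t in nhdsWithin (1 : ℝ) (Set.Iio 1), betaDigit β 1 t = (j : ℤ)) :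
    |β - ((k : ℝ) + (j : ℝ) / (k : ℝ))| ≤ 1 / (k : ℝ) := by
  set l := nhdsWithin (1 : ℝ) (Set.Iio 1) with hl
  haveI : l.NeBot := nhdsLT_neBot 1
  have htend : Filter.Tendsto (fun t : ℝ => β * t) l (nhds β) := by
    have hc : Continuous fun t : ℝ => β * t := by continuity
    simpa using (hc.tendsto 1).mono_left nhdsWithin_le_nhds
  have h0' : ∀ᶠ t in l, (k : ℝ) ≤ β * t ∧ β * t < (k : ℝ) + 1 := by
    filter_upwards [h0] with t ht
    have hfl : ⌊β * t⌋ = (k : ℤ) := by simpa [betaDigit] using ht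
    have := (Int.floor_eq_iff).mp hfl
    exact_mod_cast this
  have hβk : (k : ℝ) ≤ β := ge_of_tendsto htend (h0'.mono fun t h => h.1)
  have hβk1 : β ≤ (k : ℝ) + 1 :=
    le_of_tendsto htend (h0'.mono fun t h => le_of_lt h.2)
  have h1' : ∀ᶠ t in l, (j : ℝ) ≤ β * (β * t - k) ∧ β * (β * t - k) < (j : ℝ) + 1 := by
    filter_upwards [h0, h1] with t ht0 ht1
    have hfl : ⌊β * t⌋ = (k : ℤ) := by simpa [betaDigit] using ht0
    have hmap : betaMap β t = β * t - k := by
      simp [betaMap, Int.fract, hfl]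
    have hfl1 : ⌊β * (β * t - k)⌋ = (j : ℤ) := by
      simpa [betaDigit, hmap] using ht1
    have := (Int.floor_eq_iff).mp hfl1
    exact_mod_cast this
  have htend2 : Filter.Tendsto (fun t : ℝ => β * (β * t - k)) l (nhds (β * (β - k))) := by
    have hc : Continuous fun t : ℝ => β * (β * t - (k : ℝ)) := by continuity
    simpa using (hc.tendsto 1).mono_left nhdsWithin_le_nhds
  have hlow : (j : ℝ) ≤ β * (β - k) := ge_of_tendsto htend2 (h1'.mono fun t h => h.1)
  have hup : β * (β - k) ≤ (j : ℝ) + 1 :=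
    le_of_tendsto htend2 (h1'.mono fun t h => le_of_lt h.2)
  have hk0 : (0 : ℝ) < k := by positivity
  have key1 : (k : ℝ) * β - k * k - j ≤ 1 := by nlinarith [sq_nonneg (β - (k : ℝ))]
  have key2 : (-1 : ℝ) ≤ (k : ℝ) * β - k * k - j := by
    nlinarith [mul_nonneg (sub_nonneg.mpr hβk) (sub_nonneg.mpr hβk1)]
  have e : β - ((k : ℝ) + (j : ℝ) / k) = ((k : ℝ) * β - k * k - j) / k := by
    field_simp; ring
  rw [e, abs_div, abs_of_pos hk0, div_le_div_iff_of_pos_right hk0]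
  rw [abs_le]
  exact ⟨key2, key1⟩
end
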